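/- For every integer n ≥ 2, the Akbulut–Kirby presentation AK(n) = ⟨x, y | xⁿ = yⁿ⁺¹, xyx = yxy⟩ is a balanced presentation of the trivial group: the normal closure of {xⁿy⁻⁽ⁿ⁺¹⁾, xyxy⁻¹x⁻¹y⁻¹} in the free group F₂ on x, y equals F₂. -/

import Mathlib

/-- The free group on two generators `x`, `y`. -/
abbrev F2 : Type := FreeGroup (Fin 2)

def x : F2 := FreeGroup.of 0
def y : F2 := FreeGroup.of 1

/-- A single AC-move on a balanced presentation `(r₁, r₂)`:
replace `r₁` by `r₁ r₂^{±1}`, or `r₂` by `r₂ r₁^{±1}`, or some `rᵢ` by `rᵢ⁻¹`,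
or some `rᵢ` by `g rᵢ g⁻¹` with `g ∈ {x, y, x⁻¹, y⁻¹}`. -/
def ACMove (p q : F2 × F2) : Prop :=
  q = (p.1 * p.2, p.2) ∨ q = (p.1 * p.2⁻¹, p.2) ∨
  q = (p.1, p.2 * p.1) ∨ q = (p.1, p.2 * p.1⁻¹) ∨
  q = (p.1⁻¹, p.2) ∨ q = (p.1, p.2⁻¹) ∨
  ∃ g : F2, (g = x ∨ g = y ∨ g = x⁻¹ ∨ g = y⁻¹) ∧
    (q = (g * p.1 * g⁻¹, p.2) ∨ q = (p.1, g * p.2 * g⁻¹))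

/-- Two balanced presentations are AC-equivalent if one can be transformed into the
other by a finite sequence of AC-moves. -/
def ACEquiv : F2 × F2 → F2 × F2 → Prop := Relation.ReflTransGen ACMove

/-- The length of a presentation: the sum of the word lengths of the two relators. -/
def presLength (p : F2 × F2) : ℕ := p.1.norm + p.2.norm

/-- The exponent sum on `x`: the `x`-coordinate of the abelianization. -/
def expSumX : F2 →* Multiplicative ℤ :=
  FreeGroup.lift (fun i => if i = 0 then Multiplicative.ofAdd (1 : ℤ) else 1)

/-- The Akbulut–Kirby presentation AK(3) = ⟨x, y ∣ x³ = y⁴, xyx = yxy⟩. -/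
def AK3 : F2 × F2 := (x ^ 3 * (y ^ 4)⁻¹, x * y * x * y⁻¹ * x⁻¹ * y⁻¹)

lemma key {G : Type*} [Group G] (a b : G) (n : ℕ)
    (h1 : a ^ n = b ^ (n + 1)) (h2 : a * b * a = b * a * b) : a = 1 ∧ b = 1 := by
  have hΔa : (a * b * a) * a = b * (a * b * a) := by
    conv_lhs => rw [h2]
    group
  have hΔb : (a * b * a) * b = a * (a * b * a) := by
    conv_lhs => rw [mul_assoc, mul_assoc, ← mul_assoc b a b, ← h2]
  have hpa : ∀ k : ℕ, (a * b * a) * a ^ k = b ^ k * (a * b * a) := by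
    intro k; induction k with
    | zero => simp
    | succ k ih =>
      rw [pow_succ, ← mul_assoc, ih, mul_assoc, hΔa, pow_succ]
      group
  have hpb : ∀ k : ℕ, (a * b * a) * b ^ k = a ^ k * (a * b * a) := by
    intro k; induction k with
    | zero => simp
    | succ k ih =>
      rw [pow_succ, ← mul_assoc, ih, mul_assoc, hΔb, pow_succ]
      group
  have h3 : a ^ (n + 1) = b ^ n := by
    have e1 := hpa n
    have e2 := hpb (n + 1)
    rw [← h1] at e2
    exact mul_right_cancel (e2.symm.trans e1)
  have hab : a = b⁻¹ := by
    have e : a * b ^ (n + 1) = b ^ n := by rw [← h1, ← pow_succ']; exact h3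
    have : a = b ^ n * (b ^ (n + 1))⁻¹ := by
      rw [← e]; group
    rw [this, pow_succ]; group
  have hb : b = 1 := by
    have hb2 : b * b = 1 := by
      have := h2
      rw [hab] at this
      have hbi : b⁻¹ = b := by
        simpa [mul_assoc] using this
      calc b * b = b⁻¹ * b := by rw [hbi]
      _ = 1 := by group
    have hodd : b ^ (2 * n + 1) = 1 := by
      have : (b⁻¹) ^ n = b ^ (n + 1) := by rw [← hab]; exact h1
      have : (1 : G) = b ^ n * b ^ (n + 1) := by
        rw [← this]; group
      calc b ^ (2 * n + 1) = b ^ n * b ^ (n + 1) := by ring_nf; rw [← pow_add]; ring_nf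
      _ = 1 := this.symm
    have hb2' : b ^ 2 = 1 := by rw [sq]; exact hb2
    have hev : b ^ (2 * n) = 1 := by rw [pow_mul, hb2', one_pow]
    calc b = b ^ (2 * n) * b := by rw [hev, one_mul]
    _ = b ^ (2 * n + 1) := by rw [pow_succ]
    _ = 1 := hodd
  refine ⟨?_, hb⟩
  rw [hab, hb]; group


theorem AK_presents_trivial_group (n : ℕ) (hn : 2 ≤ n) :
    Subgroup.normalClosure
      ({x ^ n * (y ^ (n + 1))⁻¹, x * y * x * y⁻¹ * x⁻¹ * y⁻¹} : Set F2) = ⊤ := by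
  set N := Subgroup.normalClosure
      ({x ^ n * (y ^ (n + 1))⁻¹, x * y * x * y⁻¹ * x⁻¹ * y⁻¹} : Set F2) with hN
  have hm1 : x ^ n * (y ^ (n + 1))⁻¹ ∈ N :=
    Subgroup.subset_normalClosure (Or.inl rfl)
  have hm2 : x * y * x * y⁻¹ * x⁻¹ * y⁻¹ ∈ N :=
    Subgroup.subset_normalClosure (Or.inr rfl)
  let π : F2 →* F2 ⧸ N := QuotientGroup.mk' N
  have h1 : (π x) ^ n = (π y) ^ (n + 1) := by
    have := (QuotientGroup.eq_one_iff _).mpr hm1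
    rw [show ((x ^ n * (y ^ (n + 1))⁻¹ : F2) : F2 ⧸ N) = π (x ^ n * (y ^ (n + 1))⁻¹) from rfl,
      map_mul, map_inv, map_pow, map_pow, mul_inv_eq_one] at this
    exact this
  have h2 : π x * π y * π x = π y * π x * π y := by
    have := (QuotientGroup.eq_one_iff _).mpr hm2
    rw [show ((x * y * x * y⁻¹ * x⁻¹ * y⁻¹ : F2) : F2 ⧸ N)
        = π x * π y * π x * (π y)⁻¹ * (π x)⁻¹ * (π y)⁻¹ from by
      simp [π, map_mul]] at this
    calc π x * π y * π x
        = (π x * π y * π x * (π y)⁻¹ * (π x)⁻¹ * (π y)⁻¹) * (π y * π x * π y) := by group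
      _ = π y * π x * π y := by rw [this]; group
  obtain ⟨hx1, hy1⟩ := key (π x) (π y) n h1 h2
  have hxN : x ∈ N := (QuotientGroup.eq_one_iff x).mp hx1
  have hyN : y ∈ N := (QuotientGroup.eq_one_iff y).mp hy1
  rw [eq_top_iff, ← FreeGroup.closure_range_of (Fin 2)]
  refine Subgroup.closure_le N |>.mpr ?_
  rintro _ ⟨i, rfl⟩
  fin_cases i
  · exact hxN
  · exact hyN
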